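/- Let G be a hyperbolic group with finite symmetric generating set S, word length |·|, and let δ ≥ 1 be a constant such that the geometric realization X of the Cayley graph of (G,S) satisfies: δ-thin geodesic triangles, the four-point condition min((x,z)_w,(y,z)_w) ≤ (x,y)_w + δ, the bound (x,y)_z ≤ d(z,[x,y]) ≤ (x,y)_z + δ for geodesics, and d(z,p) ≤ (x,y)_z + δ(log n + 1) for paths p of length ≤ n from x to y. There exists a constant A (depending only on G and S) such that for every conjugacy class C of G there is a subset 𝒫_C ⊆ C with |𝒫_C| ≤ A·max(|C|,1), where |C| = min{|x| : x ∈ C}, such that every x ∈ C can be written x = g h g⁻¹ with g ∈ G, h ∈ 𝒫_C, and |g| + |h| + |g⁻¹| ≤ |x| + 14δ. -/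

import Mathlib

/-- The Gromov product `(x,y)_z = ½(d(x,z) + d(y,z) − d(x,y))`. -/
noncomputable def gromovProd {X : Type*} [MetricSpace X] (x y z : X) : ℝ :=
  (dist x z + dist y z - dist x y) / 2

/-- `γ : ℝ → X` is a geodesic from `x` to `y`, parametrized by arclength on `[0, dist x y]`. -/
def IsGeodesicFrom {X : Type*} [MetricSpace X] (γ : ℝ → X) (x y : X) : Prop :=
  γ 0 = x ∧ γ (dist x y) = y ∧
    ∀ s ∈ Set.Icc (0 : ℝ) (dist x y), ∀ t ∈ Set.Icc (0 : ℝ) (dist x y),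
      dist (γ s) (γ t) = |s - t|

/-- The image of the geodesic `γ` from `x` to `y` (the geodesic segment `[x,y]`). -/
def geodSeg {X : Type*} [MetricSpace X] (γ : ℝ → X) (x y : X) : Set X :=
  γ '' Set.Icc (0 : ℝ) (dist x y)

/-- `X` is a geodesic metric space. -/
def GeodesicSpace (X : Type*) [MetricSpace X] : Prop :=
  ∀ x y : X, ∃ γ : ℝ → X, IsGeodesicFrom γ x y

/-- Every geodesic triangle of `X` is `δ`-thin: each side is contained in the
`δ`-neighbourhood of the union of the other two sides. -/
def ThinTriangles (X : Type*) [MetricSpace X] (δ : ℝ) : Prop :=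
  ∀ (x y z : X) (γ₁ γ₂ γ₃ : ℝ → X),
    IsGeodesicFrom γ₁ x y → IsGeodesicFrom γ₂ y z → IsGeodesicFrom γ₃ z x →
    ∀ p ∈ geodSeg γ₁ x y, Metric.infDist p (geodSeg γ₂ y z ∪ geodSeg γ₃ z x) ≤ δ

/-- The four-point condition with constant `δ`. -/
def FourPointCondition (X : Type*) [MetricSpace X] (δ : ℝ) : Prop :=
  ∀ x y z w : X, min (gromovProd x z w) (gromovProd y z w) ≤ gromovProd x y w + δ

/-- The Gromov product approximates the distance to a geodesic, up to `δ`. -/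
def GromovProdApproxGeod (X : Type*) [MetricSpace X] (δ : ℝ) : Prop :=
  ∀ (x y : X) (γ : ℝ → X), IsGeodesicFrom γ x y → ∀ z : X,
    gromovProd x y z ≤ Metric.infDist z (geodSeg γ x y) ∧
      Metric.infDist z (geodSeg γ x y) ≤ gromovProd x y z + δ

/-- Logarithmic Morse bound: any point is at distance at most `(x,y)_z + δ(log n + 1)` from
any path of length `≤ n` joining `x` to `y`. -/
def LogPathBound (X : Type*) [MetricSpace X] (δ : ℝ) : Prop :=
  ∀ (x y z : X) (n : ℝ), 1 ≤ n → ∀ p : ℝ → X,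
    LipschitzOnWith 1 p (Set.Icc (0 : ℝ) n) → p 0 = x → p n = y →
      Metric.infDist z (p '' Set.Icc (0 : ℝ) n) ≤ gromovProd x y z + δ * (Real.log n + 1)

/-- The word length of `g` with respect to the generating set `S`. -/
noncomputable def wordLength {G : Type*} [Group G] (S : Set G) (g : G) : ℕ :=
  sInf {n | ∃ l : List G, (∀ x ∈ l, x ∈ S) ∧ l.prod = g ∧ l.length = n}

/-- `|C| = min {|x| : x ∈ C}`, the minimal word length in a conjugacy class `C`. -/
noncomputable def minConjLength {G : Type*} [Group G] (S : Set G) (C : Set G) : ℕ :=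
  sInf (wordLength S '' C)



section WL
variable {G : Type*} [Group G] {S : Set G}

lemma wl_set_nonempty (hSsymm : ∀ s ∈ S, s⁻¹ ∈ S) (hSgen : Subgroup.closure S = ⊤) (g : G) :
    {n | ∃ l : List G, (∀ x ∈ l, x ∈ S) ∧ l.prod = g ∧ l.length = n}.Nonempty := by
  have hg : g ∈ Subgroup.closure S := by rw [hSgen]; trivial
  have : ∃ l : List G, (∀ x ∈ l, x ∈ S) ∧ l.prod = g := by
    induction hg using Subgroup.closure_induction with
    | mem x hx => exact ⟨[x], by simpa using hx, by simp⟩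
    | one => exact ⟨[], by simp, by simp⟩
    | mul x y hx hy ihx ihy =>
      obtain ⟨l1, h1, h1p⟩ := ihx; obtain ⟨l2, h2, h2p⟩ := ihy
      refine ⟨l1 ++ l2, ?_, by simp [h1p, h2p]⟩
      intro a ha
      rcases List.mem_append.mp ha with h | h
      exacts [h1 a h, h2 a h]
    | inv x hx ihx =>
      obtain ⟨l, hl, hlp⟩ := ihx
      refine ⟨(l.map fun a => a⁻¹).reverse, ?_, ?_⟩
      · intro a ha
        simp only [List.mem_reverse, List.mem_map] at ha
        obtain ⟨b, hb, rfl⟩ := ha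
        exact hSsymm b (hl b hb)
      · rw [← List.prod_inv_reverse, hlp]
  obtain ⟨l, hl, hlp⟩ := this
  exact ⟨l.length, l, hl, hlp, rfl⟩

lemma wl_exists (hSsymm : ∀ s ∈ S, s⁻¹ ∈ S) (hSgen : Subgroup.closure S = ⊤) (g : G) :
    ∃ l : List G, (∀ x ∈ l, x ∈ S) ∧ l.prod = g ∧ l.length = wordLength S g :=
  Nat.sInf_mem (wl_set_nonempty hSsymm hSgen g)

lemma wl_le_of_list {l : List G} (hl : ∀ x ∈ l, x ∈ S) (g : G) (hp : l.prod = g) :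
    wordLength S g ≤ l.length :=
  Nat.sInf_le ⟨l, hl, hp, rfl⟩

lemma wl_one : wordLength S (1 : G) = 0 :=
  Nat.le_zero.mp (wl_le_of_list (l := []) (by simp) 1 (by simp))

lemma eq_one_of_wl_eq_zero (hSsymm : ∀ s ∈ S, s⁻¹ ∈ S) (hSgen : Subgroup.closure S = ⊤)
    {g : G} (h : wordLength S g = 0) : g = 1 := by
  obtain ⟨l, _, hp, hlen⟩ := wl_exists hSsymm hSgen g
  rw [h, List.length_eq_zero_iff] at hlen
  simp [hlen] at hp; exact hp.symm

lemma wl_mul_le (hSsymm : ∀ s ∈ S, s⁻¹ ∈ S) (hSgen : Subgroup.closure S = ⊤) (a b : G) :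
    wordLength S (a * b) ≤ wordLength S a + wordLength S b := by
  obtain ⟨l1, h1, h1p, h1len⟩ := wl_exists hSsymm hSgen a
  obtain ⟨l2, h2, h2p, h2len⟩ := wl_exists hSsymm hSgen b
  have := wl_le_of_list (l := l1 ++ l2)
    (by intro x hx; rcases List.mem_append.mp hx with h | h; exacts [h1 x h, h2 x h])
    (a * b) (by simp [h1p, h2p])
  simpa [h1len, h2len] using this

lemma wl_inv_le (hSsymm : ∀ s ∈ S, s⁻¹ ∈ S) (hSgen : Subgroup.closure S = ⊤) (a : G) :
    wordLength S a⁻¹ ≤ wordLength S a := by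
  obtain ⟨l, hl, hp, hlen⟩ := wl_exists hSsymm hSgen a
  have := wl_le_of_list (l := (l.map fun x => x⁻¹).reverse)
    (by intro x hx
        simp only [List.mem_reverse, List.mem_map] at hx
        obtain ⟨b, hb, rfl⟩ := hx
        exact hSsymm b (hl b hb))
    a⁻¹ (by rw [← List.prod_inv_reverse, hp])
  simpa [hlen] using this

lemma wl_inv (hSsymm : ∀ s ∈ S, s⁻¹ ∈ S) (hSgen : Subgroup.closure S = ⊤) (a : G) :
    wordLength S a⁻¹ = wordLength S a :=
  le_antisymm (wl_inv_le hSsymm hSgen a)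
    (by simpa using wl_inv_le hSsymm hSgen a⁻¹)

/-- distances between prefixes of a minimal word are exact -/
lemma wl_prefix (hSsymm : ∀ s ∈ S, s⁻¹ ∈ S) (hSgen : Subgroup.closure S = ⊤)
    {l : List G} (hl : ∀ x ∈ l, x ∈ S) (hmin : wordLength S l.prod = l.length)
    {j k : ℕ} (hjk : j ≤ k) (hk : k ≤ l.length) :
    wordLength S (((l.take j).prod)⁻¹ * (l.take k).prod) = k - j := by
  have hsplit : l.take k = l.take j ++ (l.drop j).take (k - j) := by
    rw [← List.take_add]
    congr 1; omega
  have hprod : ((l.take j).prod)⁻¹ * (l.take k).prod = ((l.drop j).take (k - j)).prod := by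
    rw [hsplit, List.prod_append]; group
  have hle : wordLength S (((l.take j).prod)⁻¹ * (l.take k).prod) ≤ k - j := by
    rw [hprod]
    have := wl_le_of_list (l := (l.drop j).take (k - j))
      (fun x hx => hl x (List.mem_of_mem_drop (List.mem_of_mem_take hx))) _ rfl
    refine this.trans ?_
    simp [List.length_take, List.length_drop]
  have hge : k - j ≤ wordLength S (((l.take j).prod)⁻¹ * (l.take k).prod) := by
    have h1 : wordLength S (l.take j).prod ≤ j := by
      have := wl_le_of_list (l := l.take j) (fun x hx => hl x (List.mem_of_mem_take hx)) _ rfl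
      refine this.trans ?_; simp [List.length_take]
    have h2 : wordLength S (((l.take k).prod)⁻¹ * l.prod) ≤ l.length - k := by
      have hprod2 : ((l.take k).prod)⁻¹ * l.prod = (l.drop k).prod := by
        have e2 : (l.take k).prod * (l.drop k).prod = l.prod := by
          rw [← List.prod_append, List.take_append_drop]
        rw [← e2]; group
      rw [hprod2]
      have := wl_le_of_list (l := l.drop k) (fun x hx => hl x (List.mem_of_mem_drop hx)) _ rfl
      simpa using this
    have h3 : l.length ≤ j + wordLength S (((l.take j).prod)⁻¹ * (l.take k).prod)
        + (l.length - k) := by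
      calc l.length = wordLength S l.prod := hmin.symm
        _ ≤ wordLength S (l.take j).prod
            + wordLength S (((l.take j).prod)⁻¹ * (l.take k).prod)
            + wordLength S (((l.take k).prod)⁻¹ * l.prod) := by
              have e : l.prod = (l.take j).prod * ((((l.take j).prod)⁻¹ * (l.take k).prod)
                  * (((l.take k).prod)⁻¹ * l.prod)) := by group
              calc wordLength S l.prod
                  ≤ wordLength S (l.take j).prod
                    + wordLength S ((((l.take j).prod)⁻¹ * (l.take k).prod)
                      * (((l.take k).prod)⁻¹ * l.prod)) := by
                    rw (occs := .pos [1]) [e]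
                    exact wl_mul_le hSsymm hSgen _ _
                _ ≤ _ := by
                    have := wl_mul_le hSsymm hSgen ((((l.take j).prod)⁻¹ * (l.take k).prod))
                      ((((l.take k).prod)⁻¹ * l.prod))
                    omega
        _ ≤ j + wordLength S (((l.take j).prod)⁻¹ * (l.take k).prod) + (l.length - k) := by
              omega
    omega
  omega

end WL

section Ball
variable {G : Type*} [Group G] {S : Set G}

lemma ball_finite (hSfin : S.Finite) (hSsymm : ∀ s ∈ S, s⁻¹ ∈ S)
    (hSgen : Subgroup.closure S = ⊤) (N : ℕ) :
    {g : G | wordLength S g ≤ N}.Finite := by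
  have : Finite ↥S := hSfin
  have hfin : {l : List ↥S | l.length ≤ N}.Finite := List.finite_length_le ↥S N
  have himg : {g : G | wordLength S g ≤ N} ⊆
      (fun l : List ↥S => (l.map Subtype.val).prod) '' {l | l.length ≤ N} := by
    intro g hg
    obtain ⟨l, hl, hp, hlen⟩ := wl_exists hSsymm hSgen g
    refine ⟨l.attach.map fun x => (⟨x.1, hl x.1 x.2⟩ : ↥S), ?_, ?_⟩
    · simp only [Set.mem_setOf_eq, List.length_map, List.length_attach]
      simp only [Set.mem_setOf_eq] at hg
      omega
    · simp only [List.map_map]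
      have : (l.attach.map fun x => x.1).prod = l.prod := by
        simp [List.attach_map_val]
      simpa [Function.comp] using this.trans hp
  exact (hfin.image _).subset himg

end Ball

section Geo
variable {X : Type*} [MetricSpace X]

lemma glue_geodesic {x y z : X} {γ₁ γ₂ : ℝ → X} (h₁ : IsGeodesicFrom γ₁ x y)
    (h₂ : IsGeodesicFrom γ₂ y z) (hsum : dist x z = dist x y + dist y z) :
    ∃ γ : ℝ → X, IsGeodesicFrom γ x z ∧
      geodSeg γ x z ⊆ geodSeg γ₁ x y ∪ geodSeg γ₂ y z := by
  obtain ⟨h10, h11, h1d⟩ := h₁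
  obtain ⟨h20, h21, h2d⟩ := h₂
  set d1 := dist x y with hd1
  set d2 := dist y z with hd2
  have hd1n : 0 ≤ d1 := dist_nonneg
  have hd2n : 0 ≤ d2 := dist_nonneg
  refine ⟨fun t => if t < d1 then γ₁ t else γ₂ (t - d1), ?_, ?_⟩
  · -- IsGeodesicFrom
    have key : ∀ s ∈ Set.Icc (0:ℝ) (d1 + d2), ∀ t ∈ Set.Icc (0:ℝ) (d1 + d2), s ≤ t →
        dist (if s < d1 then γ₁ s else γ₂ (s - d1)) (if t < d1 then γ₁ t else γ₂ (t - d1))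
          = t - s := by
      intro s hs t ht hst
      obtain ⟨hs0, hs1⟩ := hs
      obtain ⟨ht0, ht1⟩ := ht
      by_cases hsc : s < d1
      · by_cases htc : t < d1
        · simp only [if_pos hsc, if_pos htc]
          rw [h1d s ⟨hs0, le_of_lt hsc⟩ t ⟨ht0, le_of_lt htc⟩, abs_of_nonpos (by linarith)]
          ring
        · simp only [if_pos hsc, if_neg htc]
          push_neg at htc
          have htIcc : t - d1 ∈ Set.Icc (0:ℝ) d2 := ⟨by linarith, by linarith [ht1]⟩
          have e1 : dist (γ₁ s) y = d1 - s := by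
            rw [← h11, h1d s ⟨hs0, le_of_lt hsc⟩ d1 ⟨hd1n, le_refl _⟩,
              abs_of_nonpos (by linarith)]; ring
          have e2 : dist y (γ₂ (t - d1)) = t - d1 := by
            rw [← h20, h2d 0 ⟨le_refl _, hd2n⟩ (t - d1) htIcc, abs_of_nonpos (by linarith)]
            ring
          have e3 : dist (γ₂ (t - d1)) z = d2 - (t - d1) := by
            rw [← h21, h2d (t - d1) htIcc d2 ⟨hd2n, le_refl _⟩, abs_of_nonpos (by linarith [ht1])]
            ring
          have e4 : dist x (γ₁ s) = s := by
            rw [← h10, h1d 0 ⟨le_refl _, hd1n⟩ s ⟨hs0, le_of_lt hsc⟩, abs_of_nonpos (by linarith)]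
            ring
          have hub : dist (γ₁ s) (γ₂ (t - d1)) ≤ t - s := by
            calc dist (γ₁ s) (γ₂ (t - d1)) ≤ dist (γ₁ s) y + dist y (γ₂ (t - d1)) :=
                  dist_triangle _ _ _
              _ = t - s := by rw [e1, e2]; ring
          have hlb : t - s ≤ dist (γ₁ s) (γ₂ (t - d1)) := by
            have t1 : dist x z ≤ dist x (γ₂ (t - d1)) + dist (γ₂ (t - d1)) z :=
              dist_triangle _ _ _
            have t2 : dist x (γ₂ (t - d1)) ≤ dist x (γ₁ s) + dist (γ₁ s) (γ₂ (t - d1)) :=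
              dist_triangle _ _ _
            rw [hsum] at t1
            rw [e3] at t1; rw [e4] at t2
            linarith
          linarith
      · -- s ≥ d1, so t ≥ d1
        have htc : ¬ t < d1 := by push_neg at hsc ⊢; linarith
        simp only [if_neg hsc, if_neg htc]
        push_neg at hsc htc
        rw [h2d (s - d1) ⟨by linarith, by linarith [hs1]⟩ (t - d1)
          ⟨by linarith, by linarith [ht1]⟩, abs_of_nonpos (by linarith)]
        ring
    refine ⟨?_, ?_, ?_⟩
    · show (if (0:ℝ) < d1 then γ₁ 0 else γ₂ (0 - d1)) = x
      by_cases h0 : (0:ℝ) < d1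
      · simp only [if_pos h0, h10]
      · have hz : d1 = 0 := le_antisymm (not_lt.mp h0) hd1n
        have hxy : x = y := by rw [← dist_eq_zero]; exact hz
        rw [if_neg h0, hz, sub_zero, h20, hxy]
    · rw [hsum]
      have : ¬ d1 + d2 < d1 := by push_neg; linarith
      simp only [if_neg this]
      have : d1 + d2 - d1 = d2 := by ring
      rw [this, h21]
    · intro s hs t ht
      rw [hsum] at hs ht
      rcases le_total s t with h | h
      · rw [key s hs t ht h, abs_of_nonpos (by linarith)]; ring
      · rw [dist_comm, key t ht s hs h, abs_of_nonneg (by linarith)]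
  · intro w hw
    obtain ⟨t, ht, rfl⟩ := hw
    rw [hsum] at ht
    by_cases htc : t < d1
    · left; exact ⟨t, ⟨ht.1, le_of_lt htc⟩, by simp [if_pos htc]⟩
    · right
      push_neg at htc
      exact ⟨t - d1, ⟨by linarith, by linarith [ht.2]⟩, by simp [if_neg (not_lt.mpr htc)]⟩

lemma unit_geodesic_half {x y : X} {γ : ℝ → X} (h : IsGeodesicFrom γ x y)
    (hd : dist x y = 1) : ∀ w ∈ geodSeg γ x y, dist w x ≤ 1/2 ∨ dist w y ≤ 1/2 := by
  obtain ⟨h0, h1, hdp⟩ := h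
  intro w hw
  obtain ⟨t, ht, rfl⟩ := hw
  rw [hd] at ht
  rcases le_total t (1/2) with h | h
  · left
    rw [← h0, hdp t (by rw [hd]; exact ht) 0 (by rw [hd]; exact ⟨le_refl _, by norm_num⟩)]
    rw [abs_of_nonneg (by linarith [ht.1])]; linarith
  · right
    rw [← h1, hd, hdp t (by rw [hd]; exact ht) 1 (by rw [hd]; exact ⟨by norm_num, le_refl _⟩)]
    rw [abs_of_nonpos (by linarith [ht.2])]; linarith

lemma chain_geodesic (hgeod : GeodesicSpace X) (F : ℕ → X) :
    ∀ L : ℕ, 1 ≤ L → (∀ j k, j ≤ L → k ≤ L → dist (F j) (F k) = |(j:ℝ) - (k:ℝ)|) →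
    ∃ γ, IsGeodesicFrom γ (F 0) (F L) ∧
      ∀ w ∈ geodSeg γ (F 0) (F L), ∃ j, j ≤ L ∧ dist w (F j) ≤ 1/2 := by
  intro L
  induction L with
  | zero => intro h; omega
  | succ L ih =>
    intro _ hF
    by_cases hL : L = 0
    · subst hL
      obtain ⟨γ, hγ⟩ := hgeod (F 0) (F 1)
      refine ⟨γ, hγ, ?_⟩
      intro w hw
      have hd : dist (F 0) (F 1) = 1 := by
        rw [hF 0 1 (by omega) (by omega)]; norm_num
      rcases unit_geodesic_half hγ hd w hw with h | h
      · exact ⟨0, by omega, h⟩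
      · exact ⟨1, by omega, h⟩
    · have hL1 : 1 ≤ L := by omega
      obtain ⟨γ₁, hγ₁, hnear₁⟩ := ih hL1 (fun j k hj hk => hF j k (by omega) (by omega))
      obtain ⟨γ₂, hγ₂⟩ := hgeod (F L) (F (L + 1))
      have habs : ∀ a b : ℕ, a ≤ b → |(a:ℝ) - (b:ℝ)| = (b:ℝ) - (a:ℝ) := by
        intro a b h
        rw [abs_of_nonpos (sub_nonpos.mpr (by exact_mod_cast h)), neg_sub]
      have hsum : dist (F 0) (F (L + 1)) = dist (F 0) (F L) + dist (F L) (F (L + 1)) := by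
        rw [hF 0 (L+1) (by omega) (by omega), hF 0 L (by omega) (by omega),
          hF L (L+1) (by omega) (by omega), habs 0 (L+1) (by omega), habs 0 L (by omega),
          habs L (L+1) (by omega)]
        push_cast; ring
      obtain ⟨γ, hγ, hsub⟩ := glue_geodesic hγ₁ hγ₂ hsum
      refine ⟨γ, hγ, ?_⟩
      intro w hw
      rcases hsub hw with h | h
      · obtain ⟨j, hj, hjd⟩ := hnear₁ w h
        exact ⟨j, by omega, hjd⟩
      · have hd : dist (F L) (F (L+1)) = 1 := by
          rw [hF L (L+1) (by omega) (by omega), habs L (L+1) (by omega)]; push_cast; ring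
        rcases unit_geodesic_half hγ₂ hd w h with h' | h'
        · exact ⟨L, by omega, h'⟩
        · exact ⟨L + 1, by omega, h'⟩

end Geo


/-- Let `G` be hyperbolic with finite symmetric generating set `S`, and `δ ≥ 1`
a constant such that the geometric realization `X` of the Cayley graph (a geodesic space into
which `G` embeds isometrically for the word metric) has `δ`-thin triangles and satisfies the
four-point condition, the Gromov-product approximation of the distance to geodesics, and the
logarithmic Morse bound for paths, all with constant `δ`. There is a constant `A` such that for
every conjugacy class `C` there is `𝒫_C ⊆ C` with `|𝒫_C| ≤ A·max(|C|,1)` such that every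
`x ∈ C` is `x = g h g⁻¹` with `h ∈ 𝒫_C` and `|g| + |h| + |g⁻¹| ≤ |x| + 14δ`. -/
theorem stmt5 {G : Type*} [Group G] (S : Set G) (hSfin : S.Finite)
    (hSsymm : ∀ s ∈ S, s⁻¹ ∈ S) (hSgen : Subgroup.closure S = ⊤)
    (X : Type*) [MetricSpace X] (ι : G → X)
    (hι : ∀ g h : G, dist (ι g) (ι h) = (wordLength S (g⁻¹ * h) : ℝ))
    (δ : ℝ) (hδ : 1 ≤ δ)
    (hgeod : GeodesicSpace X) (hthin : ThinTriangles X δ)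
    (hfour : FourPointCondition X δ) (happrox : GromovProdApproxGeod X δ)
    (hlog : LogPathBound X δ) :
    ∃ A : ℝ, ∀ C : Set G, (∃ x₀ : G, C = {y | IsConj x₀ y}) →
      ∃ P : Set G, P ⊆ C ∧ P.Finite ∧
        (P.ncard : ℝ) ≤ A * max (minConjLength S C : ℝ) 1 ∧
        ∀ x ∈ C, ∃ g h : G, h ∈ P ∧ x = g * h * g⁻¹ ∧
          (wordLength S g : ℝ) + wordLength S h + wordLength S g⁻¹ ≤
            (wordLength S x : ℝ) + 14 * δ := by
  classical
  -- the ball of radius 20δ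
  set Ball : Set G := {g : G | (wordLength S g : ℝ) ≤ 20 * δ} with hBall
  have hBfin : Ball.Finite := by
    have h1 : Ball ⊆ {g : G | wordLength S g ≤ ⌈(20:ℝ) * δ⌉₊} := by
      intro g hg
      simp only [hBall, Set.mem_setOf_eq] at hg ⊢
      exact_mod_cast hg.trans (Nat.le_ceil _)
    exact (ball_finite hSfin hSsymm hSgen _).subset h1
  refine ⟨(Ball.ncard : ℝ) + 2, ?_⟩
  rintro C ⟨x₀, hC⟩
  have hx₀C : x₀ ∈ C := by rw [hC]; exact IsConj.refl x₀
  -- conjugation closure of C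
  have hconjC : ∀ y ∈ C, ∀ w : G, w⁻¹ * y * w ∈ C := by
    intro y hy w
    rw [hC] at hy ⊢
    exact hy.trans (isConj_iff.mpr ⟨w⁻¹, by group⟩)
  -- minimal element of C
  set n := minConjLength S C with hn
  obtain ⟨c₀, hc₀C, hc₀len⟩ : ∃ c₀ ∈ C, wordLength S c₀ = n := by
    have : n ∈ wordLength S '' C := Nat.sInf_mem (Set.image_nonempty.mpr ⟨x₀, hx₀C⟩)
    obtain ⟨c₀, hc₀, hlen⟩ := this
    exact ⟨c₀, hc₀, hlen⟩
  have hwlC : ∀ y ∈ C, n ≤ wordLength S y := fun y hy =>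
    Nat.sInf_le (Set.mem_image_of_mem _ hy)
  -- minimal word of c₀
  obtain ⟨l₀, hl₀S, hl₀prod, hl₀len⟩ := wl_exists hSsymm hSgen c₀
  rw [hc₀len] at hl₀len
  set u : ℕ → G := fun j => (l₀.take j).prod with hu
  set shifts : Set G := (fun j => (u j)⁻¹ * c₀ * u j) '' (Set.Iic n) with hshifts
  set ballC : Set G := {h | h ∈ C ∧ (wordLength S h : ℝ) ≤ 20 * δ} with hballC
  set P : Set G := shifts ∪ ballC with hP
  have hshiftsC : shifts ⊆ C := by
    rintro - ⟨j, -, rfl⟩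
    exact hconjC c₀ hc₀C (u j)
  have hPC : P ⊆ C := by
    rintro h (hs | hb)
    · exact hshiftsC hs
    · exact hb.1
  have hshiftsFin : shifts.Finite := (Set.finite_Iic n).image _
  have hballCFin : ballC.Finite := hBfin.subset (fun g hg => hg.2)
  have hPfin : P.Finite := hshiftsFin.union hballCFin
  refine ⟨P, hPC, hPfin, ?_, ?_⟩
  · -- cardinality bound
    have h1 : P.ncard ≤ shifts.ncard + ballC.ncard := Set.ncard_union_le _ _
    have h2 : shifts.ncard ≤ n + 1 := by
      have h2' : shifts.ncard ≤ (Set.Iic n).ncard := by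
        rw [hshifts]; exact Set.ncard_image_le (Set.finite_Iic n)
      have hIic : (Set.Iic n).ncard = n + 1 := by
        rw [← Finset.coe_Iic, Set.ncard_coe_finset, Nat.card_Iic]
      omega
    have h3 : ballC.ncard ≤ Ball.ncard := Set.ncard_le_ncard (fun g hg => hg.2) hBfin
    have hcast : (P.ncard : ℝ) ≤ (n : ℝ) + 1 + (Ball.ncard : ℝ) := by
      have : P.ncard ≤ n + 1 + Ball.ncard := by omega
      exact_mod_cast this
    have hmax1 : (1:ℝ) ≤ max (n : ℝ) 1 := le_max_right _ _
    have hmaxn : (n:ℝ) ≤ max (n : ℝ) 1 := le_max_left _ _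
    have hBn : (0:ℝ) ≤ (Ball.ncard : ℝ) := by positivity
    calc (P.ncard : ℝ) ≤ (n : ℝ) + 1 + (Ball.ncard : ℝ) := hcast
      _ ≤ 2 * max (n : ℝ) 1 + (Ball.ncard : ℝ) * max (n : ℝ) 1 := by nlinarith
      _ = ((Ball.ncard : ℝ) + 2) * max (n : ℝ) 1 := by ring
  · -- covering
    intro x hx
    -- the shift-stability lemma
    have hstab : ∀ v ∈ P, ∃ l : List G, (∀ a ∈ l, a ∈ S) ∧ l.prod = v ∧
        l.length = wordLength S v ∧
        ∀ j ≤ l.length, ((l.take j).prod)⁻¹ * v * ((l.take j).prod) ∈ P := by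
      have hudef : ∀ j, u j = (l₀.take j).prod := fun _ => rfl
      rintro v (hs | ⟨hvC, hvB⟩)
      · -- shift case
        obtain ⟨i, hiIic, hvi⟩ := hs
        have hi : i ≤ n := hiIic
        have hv : v = (u i)⁻¹ * c₀ * u i := by rw [← hvi]
        set l : List G := l₀.drop i ++ l₀.take i with hl
        have hlS : ∀ a ∈ l, a ∈ S := by
          intro a ha
          rcases List.mem_append.mp ha with h | h
          · exact hl₀S a (List.mem_of_mem_drop h)
          · exact hl₀S a (List.mem_of_mem_take h)
        have hdropprod : (l₀.drop i).prod = (u i)⁻¹ * c₀ := by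
          have h5 : u i * (l₀.drop i).prod = c₀ := by
            rw [hudef, ← List.prod_append, List.take_append_drop, hl₀prod]
          rw [← h5]; group
        have hlprod : l.prod = v := by
          rw [hl, List.prod_append, hdropprod, hv, hudef]
        have hvC' : v ∈ C := by rw [hv]; exact hconjC c₀ hc₀C (u i)
        have hllen : l.length = n := by
          rw [hl, List.length_append, List.length_drop, List.length_take, hl₀len]
          omega
        have hwlv : wordLength S v = n := by
          have hle : wordLength S v ≤ n := by
            have := wl_le_of_list hlS v hlprod
            omega
          exact le_antisymm hle (hwlC v hvC')
        refine ⟨l, hlS, hlprod, by omega, ?_⟩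
        intro j hj
        rw [hllen] at hj
        by_cases hcase : j ≤ n - i
        · -- prefix inside the first block
          have htake : l.take j = (l₀.drop i).take j := by
            rw [hl, List.take_append_of_le_length]
            rw [List.length_drop, hl₀len]; omega
          have htp : (l.take j).prod = (u i)⁻¹ * u (i + j) := by
            have h6 : u (i + j) = u i * ((l₀.drop i).take j).prod := by
              rw [hudef, hudef, List.take_add, List.prod_append]
            rw [htake, h6]
            group
          refine Or.inl ⟨i + j, by simp only [Set.mem_Iic]; omega, ?_⟩
          rw [htp, hv]; group
        · -- wrapping prefix
          push_neg at hcase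
          set r := j - (n - i) with hr
          have hrle : r ≤ i := by omega
          have htake : l.take j = l₀.drop i ++ l₀.take r := by
            rw [hl, List.take_append]
            have hlen1 : (l₀.drop i).length = n - i := by rw [List.length_drop, hl₀len]
            rw [List.take_of_length_le (by rw [hlen1]; omega)]
            congr 1
            rw [hlen1, List.take_take]
            congr 1
            omega
          have htp : (l.take j).prod = (u i)⁻¹ * c₀ * u r := by
            rw [htake, List.prod_append, hdropprod, hudef]
          refine Or.inl ⟨r, by simp only [Set.mem_Iic]; omega, ?_⟩
          rw [htp, hv]; group
      · -- ball case
        obtain ⟨l, hlS, hlprod, hllen⟩ := wl_exists hSsymm hSgen v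
        refine ⟨l, hlS, hlprod, hllen.symm ▸ rfl, ?_⟩
        intro j hj
        set w := (l.take j).prod with hw
        have hconjv : w⁻¹ * v * w ∈ C := hconjC v hvC w
        have hprodeq : w⁻¹ * v * w = ((l.drop j) ++ (l.take j)).prod := by
          rw [List.prod_append, ← hw]
          have : (l.take j).prod * (l.drop j).prod = v := by
            rw [← List.prod_append, List.take_append_drop, hlprod]
          rw [← this, ← hw]; group
        have hwl' : wordLength S (w⁻¹ * v * w) ≤ wordLength S v := by
          have := wl_le_of_list (l := (l.drop j) ++ (l.take j))
            (by intro a ha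
                rcases List.mem_append.mp ha with h | h
                · exact hlS a (List.mem_of_mem_drop h)
                · exact hlS a (List.mem_of_mem_take h))
            _ rfl
          rw [← hprodeq] at this
          refine this.trans ?_
          rw [List.length_append, List.length_drop, List.length_take]
          omega
        refine Or.inr ⟨hconjv, ?_⟩
        calc (wordLength S (w⁻¹ * v * w) : ℝ) ≤ (wordLength S v : ℝ) := by exact_mod_cast hwl'
          _ ≤ 20 * δ := hvB
    -- the set of conjugator lengths
    set T : Set ℕ := {k | ∃ w : G, w⁻¹ * x * w ∈ P ∧ wordLength S w = k} with hT
    have hTne : T.Nonempty := by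
      have hxc : IsConj x c₀ := by
        have h1 : IsConj x₀ x := by rw [hC] at hx; exact hx
        have h2 : IsConj x₀ c₀ := by rw [hC] at hc₀C; exact hc₀C
        exact h1.symm.trans h2
      obtain ⟨c, hc⟩ := isConj_iff.mp hxc
      refine ⟨wordLength S c⁻¹, c⁻¹, ?_, rfl⟩
      have : (c⁻¹)⁻¹ * x * c⁻¹ = c₀ := by rw [← hc]; group
      rw [this]
      exact Or.inl ⟨0, by simp, by simp [hu]⟩
    set m := sInf T with hm
    obtain ⟨w₀, hw₀P, hw₀len⟩ : ∃ w₀ : G, w₀⁻¹ * x * w₀ ∈ P ∧ wordLength S w₀ = m :=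
      Nat.sInf_mem hTne
    have hmin : ∀ w : G, w⁻¹ * x * w ∈ P → m ≤ wordLength S w := fun w h =>
      Nat.sInf_le ⟨w, h, rfl⟩
    set v₀ := w₀⁻¹ * x * w₀ with hv₀
    have hxeq : x = w₀ * v₀ * w₀⁻¹ := by rw [hv₀]; group
    by_cases hm0 : m = 0
    · -- trivial case : x itself is in P
      have hw₀1 : w₀ = 1 := eq_one_of_wl_eq_zero hSsymm hSgen (by omega)
      refine ⟨1, x, ?_, by group, ?_⟩
      · have : v₀ = x := by rw [hv₀, hw₀1]; group
        rw [← this]; exact hw₀P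
      · have h1 : wordLength S (1:G) = 0 := wl_one
        have h2 : wordLength S ((1:G)⁻¹) = 0 := by rw [inv_one]; exact wl_one
        rw [h1, h2]
        push_cast
        linarith
    · -- main case
      -- descent : the target v₀ must be long
      obtain ⟨lw, hlwS, hlwprod, hlwlen⟩ := wl_exists hSsymm hSgen w₀
      have hlwne : lw ≠ [] := by
        intro h
        rw [h] at hlwlen
        simp at hlwlen
        omega
      obtain ⟨L', s, rfl⟩ := (List.eq_nil_or_concat' lw).resolve_left hlwne
      have hsS : s ∈ S := hlwS s (by simp)
      set w' := L'.prod with hw'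
      have hw₀eq : w₀ = w' * s := by rw [← hlwprod, List.prod_append]; simp [hw']
      have hw'len : wordLength S w' ≤ m - 1 := by
        have := wl_le_of_list (l := L') (fun a ha => hlwS a (by simp [ha])) w' rfl
        have hL'len : L'.length = m - 1 := by
          have : L'.length + 1 = m := by
            rw [← hw₀len, ← hlwlen]; simp
          omega
        omega
      have hv'eq : w'⁻¹ * x * w' = s * v₀ * s⁻¹ := by
        rw [hv₀, hw₀eq]; group
      have hv'C : w'⁻¹ * x * w' ∈ C := hconjC x hx w'
      have hv'wl : wordLength S (w'⁻¹ * x * w') ≤ wordLength S v₀ + 2 := by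
        rw [hv'eq]
        calc wordLength S (s * v₀ * s⁻¹)
            ≤ wordLength S (s * v₀) + wordLength S s⁻¹ := wl_mul_le hSsymm hSgen _ _
          _ ≤ wordLength S s + wordLength S v₀ + wordLength S s⁻¹ := by
              have := wl_mul_le hSsymm hSgen s v₀; omega
          _ ≤ wordLength S v₀ + 2 := by
              have h1 : wordLength S s ≤ 1 := by
                have := wl_le_of_list (l := [s]) (by simpa using hsS) s (by simp); simpa using this
              have h2 : wordLength S s⁻¹ ≤ 1 := by
                have := wl_le_of_list (l := [s⁻¹]) (by simpa using hSsymm s hsS) s⁻¹ (by simp)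
                simpa using this
              omega
      have hv₀long : (20:ℝ) * δ - 2 < (wordLength S v₀ : ℝ) := by
        by_contra hcon
        push_neg at hcon
        have hball : w'⁻¹ * x * w' ∈ P := by
          refine Or.inr ⟨hv'C, ?_⟩
          have : (wordLength S (w'⁻¹ * x * w') : ℝ) ≤ (wordLength S v₀ : ℝ) + 2 := by
            exact_mod_cast hv'wl
          linarith
        have := hmin w' hball
        omega
      -- set up the axis
      obtain ⟨l, hlS, hlprod, hllen, hlstab⟩ := hstab v₀ hw₀P
      set ℓ := l.length with hℓ
      have hℓδ : (20:ℝ) * δ - 2 < (ℓ : ℝ) := by rw [hllen]; exact hv₀long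
      have hℓ1 : 1 ≤ ℓ := by
        by_contra hcon
        push_neg at hcon
        have h0 : ℓ = 0 := by omega
        rw [h0] at hℓδ
        norm_num at hℓδ
        linarith
      have hminword : wordLength S l.prod = l.length := by rw [hlprod, ← hllen]
      -- the points of the axis
      set Λ : ℕ → G := fun j => w₀ * (l.take j).prod with hΛ
      set F : ℕ → X := fun j => ι (Λ j) with hF
      have hFdef : ∀ j, F j = ι (Λ j) := fun _ => rfl
      have hΛ0 : Λ 0 = w₀ := by simp [hΛ]
      have hΛℓ : Λ ℓ = w₀ * v₀ := by simp [hΛ, hℓ, List.take_length, hlprod]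
      have hFdist : ∀ j k, j ≤ ℓ → k ≤ ℓ → dist (F j) (F k) = |(j:ℝ) - (k:ℝ)| := by
        have key : ∀ j k, j ≤ k → k ≤ ℓ → dist (F j) (F k) = (k : ℝ) - (j : ℝ) := by
          intro j k hjk hk
          rw [hFdef, hFdef, hι]
          have : (Λ j)⁻¹ * Λ k = ((l.take j).prod)⁻¹ * (l.take k).prod := by
            rw [hΛ]; group
          rw [this, wl_prefix hSsymm hSgen hlS hminword hjk hk]
          push_cast [Nat.cast_sub hjk]
          ring
        intro j k hj hk
        rcases le_total j k with h | h
        · rw [key j k h hk, abs_of_nonpos (sub_nonpos.mpr (by exact_mod_cast h : (j:ℝ) ≤ (k:ℝ)))]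
          ring
        · rw [dist_comm, key k j h hj,
            abs_of_nonneg (sub_nonneg.mpr (by exact_mod_cast h : (k:ℝ) ≤ (j:ℝ)))]
      have hΛconj : ∀ j ≤ ℓ, (Λ j)⁻¹ * x * (Λ j) ∈ P := by
        intro j hj
        have : (Λ j)⁻¹ * x * (Λ j) = ((l.take j).prod)⁻¹ * v₀ * ((l.take j).prod) := by
          rw [hΛ, hv₀]; group
        rw [this]
        exact hlstab j hj
      have hΛlong : ∀ j ≤ ℓ, m ≤ wordLength S (Λ j) := by
        intro j hj
        exact hmin (Λ j) (hΛconj j hj)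
      have hxΛlong : ∀ j ≤ ℓ, m ≤ wordLength S (x⁻¹ * Λ j) := by
        intro j hj
        apply hmin
        have : (x⁻¹ * Λ j)⁻¹ * x * (x⁻¹ * Λ j) = (Λ j)⁻¹ * x * (Λ j) := by group
        rw [this]
        exact hΛconj j hj
      -- the geodesic along the axis
      obtain ⟨γ, hγ, hnear⟩ := chain_geodesic hgeod F ℓ hℓ1 hFdist
      -- basic distances
      have hd1p : dist (ι 1) (F 0) = (m : ℝ) := by
        rw [hFdef, hΛ0, hι]; simp [hw₀len]
      have hdxq : dist (ι x) (F ℓ) = (m : ℝ) := by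
        rw [hFdef, hΛℓ, hι]
        have : x⁻¹ * (w₀ * v₀) = w₀ := by rw [hv₀]; group
        rw [this, hw₀len]
      have hdpq : dist (F 0) (F ℓ) = (ℓ : ℝ) := by
        rw [hFdist 0 ℓ (by omega) (le_refl _)]
        simp
      have hd1x : dist (ι 1) (ι x) = (wordLength S x : ℝ) := by
        rw [hι]; simp
      -- distances from 1 and x to axis points
      have hd1Λ : ∀ j ≤ ℓ, (m : ℝ) ≤ dist (ι 1) (F j) := by
        intro j hj
        rw [hFdef, hι]
        simp only [inv_one, one_mul]
        exact_mod_cast hΛlong j hj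
      have hdxΛ : ∀ j ≤ ℓ, (m : ℝ) ≤ dist (ι x) (F j) := by
        intro j hj
        rw [hFdef, hι]
        exact_mod_cast hxΛlong j hj
      -- infDist lower bounds
      have hsegne : (geodSeg γ (F 0) (F ℓ)).Nonempty := by
        refine ⟨γ 0, 0, ?_, rfl⟩
        exact ⟨le_refl _, dist_nonneg⟩
      have hinf : ∀ z : X, (∀ j ≤ ℓ, (m:ℝ) ≤ dist z (F j)) →
          (m : ℝ) - 1/2 ≤ Metric.infDist z (geodSeg γ (F 0) (F ℓ)) := by
        intro z hz
        by_contra hcon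
        push_neg at hcon
        obtain ⟨w, hwseg, hwlt⟩ := (Metric.infDist_lt_iff hsegne).mp hcon
        obtain ⟨j, hj, hjd⟩ := hnear w hwseg
        have := dist_triangle z w (F j)
        have hzj := hz j hj
        linarith [hzj, this, hjd, hwlt]
      -- Gromov product bounds via happrox
      have happ1 := (happrox (F 0) (F ℓ) γ hγ (ι 1)).2
      have happx := (happrox (F 0) (F ℓ) γ hγ (ι x)).2
      have hgp1 : (m:ℝ) - 1/2 - δ ≤ gromovProd (F 0) (F ℓ) (ι 1) := by
        have := hinf (ι 1) (hd1Λ)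
        linarith
      have hgpx : (m:ℝ) - 1/2 - δ ≤ gromovProd (F 0) (F ℓ) (ι x) := by
        have := hinf (ι x) (hdxΛ)
        linarith
      -- unfold the Gromov products
      have hq1 : (m:ℝ) + (ℓ:ℝ) - 1 - 2*δ ≤ dist (ι 1) (F ℓ) := by
        have : gromovProd (F 0) (F ℓ) (ι 1)
            = (dist (F 0) (ι 1) + dist (F ℓ) (ι 1) - dist (F 0) (F ℓ)) / 2 := rfl
        rw [this, dist_comm (F 0) (ι 1), dist_comm (F ℓ) (ι 1), hd1p, hdpq] at hgp1
        linarith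
      have hqx : (m:ℝ) + (ℓ:ℝ) - 1 - 2*δ ≤ dist (ι x) (F 0) := by
        have : gromovProd (F 0) (F ℓ) (ι x)
            = (dist (F 0) (ι x) + dist (F ℓ) (ι x) - dist (F 0) (F ℓ)) / 2 := rfl
        rw [this, dist_comm (F 0) (ι x), dist_comm (F ℓ) (ι x), hdxq, hdpq] at hgpx
        linarith
      -- four-point condition at F 0
      have h4 := hfour (ι 1) (F ℓ) (ι x) (F 0)
      have hg3 : gromovProd (ι 1) (F ℓ) (F 0) ≤ δ + 1/2 := by
        have : gromovProd (ι 1) (F ℓ) (F 0)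
            = (dist (ι 1) (F 0) + dist (F ℓ) (F 0) - dist (ι 1) (F ℓ)) / 2 := rfl
        rw [this, hd1p, dist_comm (F ℓ) (F 0), hdpq]
        linarith
      have hg2 : (ℓ:ℝ) - 1/2 - δ ≤ gromovProd (F ℓ) (ι x) (F 0) := by
        have : gromovProd (F ℓ) (ι x) (F 0)
            = (dist (F ℓ) (F 0) + dist (ι x) (F 0) - dist (F ℓ) (ι x)) / 2 := rfl
        rw [this, dist_comm (F ℓ) (F 0), hdpq, dist_comm (F ℓ) (ι x), hdxq]
        linarith
      have halpha : gromovProd (ι 1) (ι x) (F 0) ≤ 2*δ + 1/2 := by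
        have hmin4 : min (gromovProd (ι 1) (ι x) (F 0)) (gromovProd (F ℓ) (ι x) (F 0))
            ≤ 2*δ + 1/2 := by
          refine h4.trans ?_
          linarith
        rcases min_le_iff.mp hmin4 with h | h
        · exact h
        · exfalso
          linarith
      have hfinal : 2*(m:ℝ) + (ℓ:ℝ) - 6*δ - 2 ≤ (wordLength S x : ℝ) := by
        have : gromovProd (ι 1) (ι x) (F 0)
            = (dist (ι 1) (F 0) + dist (ι x) (F 0) - dist (ι 1) (ι x)) / 2 := rfl
        rw [this, hd1p, hd1x] at halpha
        linarith
      refine ⟨w₀, v₀, hw₀P, hxeq, ?_⟩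
      have hwlv₀ : (wordLength S v₀ : ℝ) = (ℓ : ℝ) := by rw [← hllen]
      have hwlw₀inv : wordLength S w₀⁻¹ = m := by rw [wl_inv hSsymm hSgen, hw₀len]
      rw [hw₀len, hwlw₀inv, hwlv₀]
      linarith
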